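/- Let $(\phi_\alpha)$ be a family of admissible spectra with $\phi_\alpha(u) \to 0$ for each $u \in [0,1)$. Let $g, h: (0,1) \to [0,\infty)$ be measurable functions satisfying: (a) $g(u)/h(u) \to 1$ as $u \to 1$; (b) $g$ and $h$ are bounded on $[0,\alpha_0]$ for every $\alpha_0 < 1$; (c) $\liminf_{\alpha\to 1} \int_0^1 h(u)\phi_\alpha(u)\,du > 0$, with these integrals finite. Then $\int_0^1 g(u)\phi_\alpha(u)\,du \sim \int_0^1 h(u)\phi_\alpha(u)\,du$ as $\alpha \to 1$. -/

import Mathlib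

open MeasureTheory Filter Set
open scoped Topology

def IsAdmissibleSpectrum (φ : ℝ → ℝ) : Prop :=
  Measurable φ ∧ (∀ u ∈ Set.Ico (0:ℝ) 1, 0 ≤ φ u) ∧
  MonotoneOn φ (Set.Ico 0 1) ∧
  (∀ u ∈ Set.Ico (0:ℝ) 1, ContinuousWithinAt φ (Set.Ici u) u) ∧
  ∫ u in Set.Ioo (0:ℝ) 1, φ u = 1

/-- lifting principle. If the admissible spectra `φ_α` (each bounded)
converge pointwise to `0` on `[0,1)`, `g, h : (0,1) → [0,∞)` are measurable with
`g/h → 1` at `1⁻`, `g` and `h` bounded on `[0,α₀]` for every `α₀ < 1`, the integrals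
`∫ g φ_α`, `∫ h φ_α` finite, and `liminf ∫ h φ_α > 0`, then
`∫_0^1 g φ_α ∼ ∫_0^1 h φ_α` as `α → 1⁻`. -/
theorem stmt_18 (φ : ℝ → ℝ → ℝ)
    (hφ : ∀ α ∈ Set.Ioo (0:ℝ) 1, IsAdmissibleSpectrum (φ α))
    (hbddφ : ∀ α ∈ Set.Ioo (0:ℝ) 1, ∃ C : ℝ, ∀ u ∈ Set.Ico (0:ℝ) 1, φ α u ≤ C)
    (hconv : ∀ u ∈ Set.Ico (0:ℝ) 1,
      Tendsto (fun α => φ α u) (𝓝[<] (1:ℝ)) (𝓝 0))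
    (g h : ℝ → ℝ) (hgm : Measurable g) (hhm : Measurable h)
    (hgnn : ∀ u ∈ Set.Ioo (0:ℝ) 1, 0 ≤ g u) (hhnn : ∀ u ∈ Set.Ioo (0:ℝ) 1, 0 ≤ h u)
    (hratio : Tendsto (fun u => g u / h u) (𝓝[<] (1:ℝ)) (𝓝 1))
    (hbdd : ∀ α₀ ∈ Set.Ioo (0:ℝ) 1, ∃ C : ℝ,
      ∀ u ∈ Set.Ioc (0:ℝ) α₀, g u ≤ C ∧ h u ≤ C)
    (hgint : ∀ α ∈ Set.Ioo (0:ℝ) 1,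
      IntegrableOn (fun u => g u * φ α u) (Set.Ioo 0 1))
    (hhint : ∀ α ∈ Set.Ioo (0:ℝ) 1,
      IntegrableOn (fun u => h u * φ α u) (Set.Ioo 0 1))
    (hliminf : ∃ c > (0:ℝ), ∀ᶠ α in 𝓝[<] (1:ℝ),
      c ≤ ∫ u in Set.Ioo (0:ℝ) 1, h u * φ α u) :
    Tendsto (fun α => (∫ u in Set.Ioo (0:ℝ) 1, g u * φ α u) /
        ∫ u in Set.Ioo (0:ℝ) 1, h u * φ α u)
      (𝓝[<] (1:ℝ)) (𝓝 1) := by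

  rw [Metric.tendsto_nhds]
  intro ε hε
  set ε' : ℝ := min (ε/3) (1/2) with hε'def
  have hε'pos : 0 < ε' := lt_min (by linarith) (by norm_num)
  have hε'le : ε' ≤ ε/3 := min_le_left _ _
  have hε'half : ε' ≤ 1/2 := min_le_right _ _
  -- get δ from the ratio hypothesis
  have hratio' : {u : ℝ | |g u / h u - 1| < ε'} ∈ 𝓝[<] (1:ℝ) := by
    have := Metric.tendsto_nhds.mp hratio ε' hε'pos
    exact (by simpa [Real.dist_eq] using this : ∀ᶠ x in 𝓝[<] (1:ℝ), |g x / h x - 1| < ε')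
  obtain ⟨l, hl, hsub⟩ := mem_nhdsLT_iff_exists_Ioo_subset.mp hratio'
  set δ : ℝ := max l (1/2) with hδdef
  have hδ0 : 0 < δ := lt_of_lt_of_le (by norm_num) (le_max_right _ _)
  have hδ1 : δ < 1 := max_lt hl (by norm_num)
  have hδmem : δ ∈ Set.Ico (0:ℝ) 1 := ⟨hδ0.le, hδ1⟩
  have hIoo : ∀ u ∈ Set.Ioo δ 1, |g u / h u - 1| < ε' := fun u hu =>
    hsub ⟨lt_of_le_of_lt (le_max_left _ _) hu.1, hu.2⟩
  obtain ⟨C, hC⟩ := hbdd δ ⟨hδ0, hδ1⟩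
  have hC0 : 0 ≤ C := le_trans (hgnn δ ⟨hδ0, hδ1⟩) (hC δ ⟨hδ0, le_refl δ⟩).1
  obtain ⟨c, hc0, hcliminf⟩ := hliminf
  set θ : ℝ := ε * c / (6 * (C * δ + 1)) with hθdef
  have hden : (0:ℝ) < 6 * (C * δ + 1) := by nlinarith [mul_nonneg hC0 hδ0.le]
  have hθ0 : 0 < θ := div_pos (mul_pos hε hc0) hden
  have hθeq : θ * (6 * (C * δ + 1)) = ε * c := by
    rw [hθdef]; exact div_mul_cancel₀ _ hden.ne'
  have h3 : ∀ᶠ α in 𝓝[<] (1:ℝ), φ α δ < θ := by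
    have := Metric.tendsto_nhds.mp (hconv δ hδmem) θ hθ0
    filter_upwards [this] with α hα
    rw [Real.dist_eq, sub_zero] at hα
    exact lt_of_le_of_lt (le_abs_self _) hα
  have h1 : ∀ᶠ α in 𝓝[<] (1:ℝ), α ∈ Set.Ioo (0:ℝ) 1 :=
    Ioo_mem_nhdsLT_of_mem (by norm_num : (1:ℝ) ∈ Set.Ioc (0:ℝ) 1)
  filter_upwards [h1, h3, hcliminf] with α hα hθα hcB
  set A : ℝ := ∫ u in Set.Ioo (0:ℝ) 1, g u * φ α u with hAdef
  set B : ℝ := ∫ u in Set.Ioo (0:ℝ) 1, h u * φ α u with hBdef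
  have hB : 0 < B := hc0.trans_le hcB
  obtain ⟨hφmeas, hφnn, hφmono, -, -⟩ := hφ α hα
  have Hg := hgint α hα
  have Hh := hhint α hα
  have Hd : IntegrableOn (fun u => g u * φ α u - h u * φ α u) (Set.Ioo 0 1) := Hg.sub Hh
  have hsub1 : Set.Ioc (0:ℝ) δ ⊆ Set.Ioo (0:ℝ) 1 := fun x hx => ⟨hx.1, lt_of_le_of_lt hx.2 hδ1⟩
  have hsub2 : Set.Ioo δ 1 ⊆ Set.Ioo (0:ℝ) 1 := Set.Ioo_subset_Ioo hδ0.le le_rfl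
  have hφδnn : 0 ≤ φ α δ := hφnn δ hδmem
  -- piece 1 : integral over Ioc 0 δ
  have hP1 : ∫ u in Set.Ioc (0:ℝ) δ, |g u * φ α u - h u * φ α u| ≤ δ * (2*C*(φ α δ)) := by
    have hconst : IntegrableOn (fun _ : ℝ => 2*C*(φ α δ)) (Set.Ioc (0:ℝ) δ) := by
      apply (integrableOn_const_iff enorm_ne_top).2
      right
      rw [Real.volume_Ioc]
      exact ENNReal.ofReal_lt_top
    have hmono := setIntegral_mono_on ((Hd.mono_set hsub1).abs) hconst measurableSet_Ioc
      (fun x hx => by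
        have hx01 : x ∈ Set.Ioo (0:ℝ) 1 := hsub1 hx
        have hxIco : x ∈ Set.Ico (0:ℝ) 1 := ⟨hx01.1.le, hx01.2⟩
        have hφx : 0 ≤ φ α x := hφnn x hxIco
        have hφxδ : φ α x ≤ φ α δ := hφmono hxIco hδmem hx.2
        have hgx := (hC x hx).1
        have hhx := (hC x hx).2
        have hgx0 := hgnn x hx01
        have hhx0 := hhnn x hx01
        have habs : |g x - h x| ≤ 2*C := abs_le.mpr ⟨by linarith, by linarith⟩
        calc |g x * φ α x - h x * φ α x| = |g x - h x| * φ α x := by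
              rw [← sub_mul, abs_mul, abs_of_nonneg hφx]
          _ ≤ (2*C) * (φ α δ) := mul_le_mul habs hφxδ hφx (by linarith)
          _ = 2*C*(φ α δ) := by ring)
    calc ∫ u in Set.Ioc (0:ℝ) δ, |g u * φ α u - h u * φ α u|
        ≤ ∫ _ in Set.Ioc (0:ℝ) δ, 2*C*(φ α δ) := hmono
      _ = δ * (2*C*(φ α δ)) := by
          rw [setIntegral_const, measureReal_def, Real.volume_Ioc, smul_eq_mul,
            ENNReal.toReal_ofReal (by linarith : (0:ℝ) ≤ δ - 0)]
          ring
  -- piece 2 : integral over Ioo δ 1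
  have hP2 : ∫ u in Set.Ioo δ 1, |g u * φ α u - h u * φ α u| ≤ ε' * B := by
    have step1 : ∫ u in Set.Ioo δ 1, |g u * φ α u - h u * φ α u|
        ≤ ∫ u in Set.Ioo δ 1, ε' * (h u * φ α u) := by
      refine setIntegral_mono_on ((Hd.mono_set hsub2).abs) ((Hh.mono_set hsub2).const_mul ε')
        measurableSet_Ioo (fun x hx => ?_)
      have hx01 : x ∈ Set.Ioo (0:ℝ) 1 := hsub2 hx
      have hφx : 0 ≤ φ α x := hφnn x ⟨hx01.1.le, hx01.2⟩
      have hxr := hIoo x hx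
      have hhx0 : h x ≠ 0 := by
        intro h0
        rw [h0, div_zero, zero_sub, abs_neg, abs_one] at hxr
        linarith
      have hhpos : 0 < h x := (hhnn x hx01).lt_of_ne (Ne.symm hhx0)
      have heq : g x - h x = (g x / h x - 1) * h x := by field_simp
      have hgh : |g x - h x| ≤ ε' * h x := by
        rw [heq, abs_mul, abs_of_pos hhpos]
        exact mul_le_mul_of_nonneg_right hxr.le hhpos.le
      calc |g x * φ α x - h x * φ α x| = |g x - h x| * φ α x := by
            rw [← sub_mul, abs_mul, abs_of_nonneg hφx]
        _ ≤ (ε' * h x) * φ α x := mul_le_mul_of_nonneg_right hgh hφx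
        _ = ε' * (h x * φ α x) := by ring
    have step2 : ∫ u in Set.Ioo δ 1, ε' * (h u * φ α u)
        = ε' * ∫ u in Set.Ioo δ 1, h u * φ α u := integral_const_mul _ _
    have step3 : ∫ u in Set.Ioo δ 1, h u * φ α u ≤ B := by
      refine setIntegral_mono_set Hh ?_ (HasSubset.Subset.eventuallyLE hsub2)
      refine (ae_restrict_iff' measurableSet_Ioo).2 (ae_of_all _ fun x hx => ?_)
      exact mul_nonneg (hhnn x hx) (hφnn x ⟨hx.1.le, hx.2⟩)
    calc ∫ u in Set.Ioo δ 1, |g u * φ α u - h u * φ α u|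
        ≤ ε' * ∫ u in Set.Ioo δ 1, h u * φ α u := step1.trans_eq step2
      _ ≤ ε' * B := mul_le_mul_of_nonneg_left step3 hε'pos.le
  -- combine
  have hdisj : Disjoint (Set.Ioc (0:ℝ) δ) (Set.Ioo δ 1) :=
    Set.disjoint_left.mpr fun x hx hx' => absurd hx.2 (not_le.mpr hx'.1)
  have hsplit : Set.Ioc (0:ℝ) δ ∪ Set.Ioo δ 1 = Set.Ioo (0:ℝ) 1 :=
    Set.Ioc_union_Ioo_eq_Ioo hδ0.le hδ1
  have hAB : |A - B| ≤ δ * (2*C*(φ α δ)) + ε' * B := by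
    have h1' : A - B = ∫ u in Set.Ioo (0:ℝ) 1, (g u * φ α u - h u * φ α u) :=
      (integral_sub Hg Hh).symm
    rw [h1']
    have habs : |∫ u in Set.Ioo (0:ℝ) 1, (g u * φ α u - h u * φ α u)|
        ≤ ∫ u in Set.Ioo (0:ℝ) 1, |g u * φ α u - h u * φ α u| := by
      simpa [Real.norm_eq_abs] using
        norm_integral_le_integral_norm (μ := volume.restrict (Set.Ioo (0:ℝ) 1))
          (fun u => g u * φ α u - h u * φ α u)
    refine habs.trans ?_
    rw [← hsplit, setIntegral_union hdisj measurableSet_Ioo ((Hd.mono_set hsub1).abs)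
      ((Hd.mono_set hsub2).abs)]
    linarith
  rw [Real.dist_eq]
  have hq : A / B - 1 = (A - B) / B := by field_simp
  rw [hq, abs_div, abs_of_pos hB, div_lt_iff₀ hB]
  have key1 : δ * (2*C*(φ α δ)) ≤ δ * (2*C*θ) :=
    mul_le_mul_of_nonneg_left (mul_le_mul_of_nonneg_left hθα.le (by linarith))
      hδ0.le
  have key2 : δ * (2*C*θ) ≤ ε * c / 3 := by
    nlinarith [hθeq, hθ0.le, mul_nonneg (mul_nonneg hC0 hδ0.le) hθ0.le]
  have key3 : ε' * B ≤ (ε/3) * B := mul_le_mul_of_nonneg_right hε'le hB.le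
  have key4 : ε * c ≤ ε * B := mul_le_mul_of_nonneg_left hcB hε.le
  calc |A - B| ≤ δ * (2*C*(φ α δ)) + ε' * B := hAB
    _ ≤ ε * c / 3 + (ε/3) * B := by linarith
    _ < ε * B := by nlinarith
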